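/- The quotient topological space X = Γ\G of the Heisenberg group G by the left-multiplication action of Γ is Hausdorff (T2). -/

import Mathlib

open Matrix Complex

/-- The Heisenberg matrix with rows (1,z₁,z₃), (0,1,z₂), (0,0,1). -/
def M (z₁ z₂ z₃ : ℂ) : Matrix (Fin 3) (Fin 3) ℂ :=
  !![1, z₁, z₃; 0, 1, z₂; 0, 0, 1]

lemma M_mul (a₁ a₂ a₃ b₁ b₂ b₃ : ℂ) :
    M a₁ a₂ a₃ * M b₁ b₂ b₃ = M (a₁ + b₁) (a₂ + b₂) (a₃ + b₃ + a₁ * b₂) := by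
  ext i j
  fin_cases i <;> fin_cases j <;>
    simp [M, Matrix.mul_apply, Fin.sum_univ_succ, Matrix.vecHead, Matrix.vecTail] <;> ring

lemma M_one : M 0 0 0 = 1 := by
  ext i j
  fin_cases i <;> fin_cases j <;>
    simp [M, Matrix.one_apply, Matrix.vecHead, Matrix.vecTail]

lemma M_inj : Function.Injective fun p : ℂ × ℂ × ℂ => M p.1 p.2.1 p.2.2 := by
  rintro ⟨a₁, a₂, a₃⟩ ⟨b₁, b₂, b₃⟩ h
  have h1 := congrFun (congrFun h 0) 1
  have h2 := congrFun (congrFun h 1) 2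
  have h3 := congrFun (congrFun h 0) 2
  simp [M, Matrix.vecHead, Matrix.vecTail] at h1 h2 h3
  simp [h1, h2, h3]

/-- `z ∈ ℤ[i]`, i.e. `z` is a Gaussian integer viewed inside `ℂ`. -/
def IsGaussInt (z : ℂ) : Prop := ∃ a b : ℤ, z = (a : ℂ) + (b : ℂ) * Complex.I

lemma gauss_zero : IsGaussInt 0 := ⟨0, 0, by norm_num⟩

lemma gauss_neg {z : ℂ} (h : IsGaussInt z) : IsGaussInt (-z) := by
  obtain ⟨a, b, rfl⟩ := h; exact ⟨-a, -b, by push_cast; ring⟩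

lemma gauss_add {z w : ℂ} (hz : IsGaussInt z) (hw : IsGaussInt w) : IsGaussInt (z + w) := by
  obtain ⟨a, b, rfl⟩ := hz; obtain ⟨c, d, rfl⟩ := hw
  exact ⟨a + c, b + d, by push_cast; ring⟩

lemma gauss_mul {z w : ℂ} (hz : IsGaussInt z) (hw : IsGaussInt w) : IsGaussInt (z * w) := by
  obtain ⟨a, b, rfl⟩ := hz; obtain ⟨c, d, rfl⟩ := hw
  exact ⟨a * c - b * d, a * d + b * c, by push_cast; ring_nf; rw [Complex.I_sq]; ring⟩

lemma gauss_sub {z w : ℂ} (hz : IsGaussInt z) (hw : IsGaussInt w) : IsGaussInt (z - w) := by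
  simpa [sub_eq_add_neg] using gauss_add hz (gauss_neg hw)

/-- The Heisenberg group `G` as a set of matrices. -/
def heisSet : Set (Matrix (Fin 3) (Fin 3) ℂ) := {A | ∃ z₁ z₂ z₃ : ℂ, A = M z₁ z₂ z₃}

/-- The subgroup `Γ` of matrices with Gaussian-integer entries, as a set of matrices. -/
def gammaSet : Set (Matrix (Fin 3) (Fin 3) ℂ) :=
  {A | ∃ z₁ z₂ z₃ : ℂ, IsGaussInt z₁ ∧ IsGaussInt z₂ ∧ IsGaussInt z₃ ∧ A = M z₁ z₂ z₃}

/-- The equivalence relation on `G` given by the left-multiplication action of `Γ`: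
`A ∼ B` iff `B = γ·A` for some `γ ∈ Γ`.  The Iwasawa manifold is the quotient `Γ\G`. -/
noncomputable def iwasawaSetoid : Setoid ↥heisSet where
  r A B := ∃ γ ∈ gammaSet, (B : Matrix (Fin 3) (Fin 3) ℂ) = γ * (A : Matrix (Fin 3) (Fin 3) ℂ)
  iseqv := by
    constructor
    · intro A
      exact ⟨1, ⟨0, 0, 0, gauss_zero, gauss_zero, gauss_zero, M_one.symm⟩, (one_mul _).symm⟩
    · rintro A B ⟨γ, ⟨z₁, z₂, z₃, h₁, h₂, h₃, rfl⟩, hB⟩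
      refine ⟨M (-z₁) (-z₂) (z₁ * z₂ - z₃),
        ⟨-z₁, -z₂, z₁ * z₂ - z₃, gauss_neg h₁, gauss_neg h₂,
          gauss_sub (gauss_mul h₁ h₂) h₃, rfl⟩, ?_⟩
      rw [hB, ← mul_assoc, M_mul]
      have : M (-z₁ + z₁) (-z₂ + z₂) (z₁ * z₂ - z₃ + z₃ + -z₁ * z₂) = 1 := by
        rw [show (-z₁ + z₁ : ℂ) = 0 by ring, show (-z₂ + z₂ : ℂ) = 0 by ring,
          show (z₁ * z₂ - z₃ + z₃ + -z₁ * z₂ : ℂ) = 0 by ring, M_one]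
      rw [this, one_mul]
    · rintro A B C ⟨γ, ⟨z₁, z₂, z₃, h₁, h₂, h₃, rfl⟩, hB⟩ ⟨δ, ⟨w₁, w₂, w₃, g₁, g₂, g₃, rfl⟩, hC⟩
      refine ⟨M (w₁ + z₁) (w₂ + z₂) (w₃ + z₃ + w₁ * z₂),
        ⟨w₁ + z₁, w₂ + z₂, w₃ + z₃ + w₁ * z₂, gauss_add g₁ h₁, gauss_add g₂ h₂,
          gauss_add (gauss_add g₃ h₃) (gauss_mul g₁ h₂), rfl⟩, ?_⟩
      rw [hC, hB, ← mul_assoc, M_mul]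

/-- The Gaussian lattice `ℤ[i]` as an additive subgroup of `ℂ`. -/
noncomputable def gaussLattice : AddSubgroup ℂ where
  carrier := {z | IsGaussInt z}
  zero_mem' := gauss_zero
  add_mem' := gauss_add
  neg_mem' := gauss_neg

/-- The projection `π : G → ℂ²`, `M(z₁,z₂,z₃) ↦ (z₁,z₂)` (read off the matrix entries). -/
def piMap (A : Matrix (Fin 3) (Fin 3) ℂ) : ℂ × ℂ := (A 0 1, A 1 2)

def Heis : Type := ℂ × ℂ × ℂ

noncomputable instance : TopologicalSpace Heis := inferInstanceAs (TopologicalSpace (ℂ × ℂ × ℂ))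
instance : T2Space Heis := inferInstanceAs (T2Space (ℂ × ℂ × ℂ))
instance : LocallyCompactSpace Heis := inferInstanceAs (LocallyCompactSpace (ℂ × ℂ × ℂ))

instance : Mul Heis := ⟨fun a b => (a.1 + b.1, a.2.1 + b.2.1, a.2.2 + b.2.2 + a.1 * b.2.1)⟩
instance : One Heis := ⟨((0 : ℂ), (0 : ℂ), (0 : ℂ))⟩
instance : Inv Heis := ⟨fun a => (-a.1, -a.2.1, a.1 * a.2.1 - a.2.2)⟩

lemma Heis.mul_def (a b : Heis) :
    a * b = (a.1 + b.1, a.2.1 + b.2.1, a.2.2 + b.2.2 + a.1 * b.2.1) := rfl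
lemma Heis.one_def : (1 : Heis) = ((0 : ℂ), (0 : ℂ), (0 : ℂ)) := rfl
lemma Heis.inv_def (a : Heis) : a⁻¹ = (-a.1, -a.2.1, a.1 * a.2.1 - a.2.2) := rfl

instance : Group Heis where
  mul_assoc a b c := Prod.ext (α := ℂ) (β := ℂ × ℂ)
    (show a.1 + b.1 + c.1 = a.1 + (b.1 + c.1) by ring)
    (Prod.ext (show a.2.1 + b.2.1 + c.2.1 = a.2.1 + (b.2.1 + c.2.1) by ring)
      (show a.2.2 + b.2.2 + a.1 * b.2.1 + c.2.2 + (a.1 + b.1) * c.2.1 =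
        a.2.2 + (b.2.2 + c.2.2 + b.1 * c.2.1) + a.1 * (b.2.1 + c.2.1) by ring))
  one_mul a := Prod.ext (α := ℂ) (β := ℂ × ℂ) (show 0 + a.1 = a.1 by ring)
    (Prod.ext (show 0 + a.2.1 = a.2.1 by ring) (show 0 + a.2.2 + 0 * a.2.1 = a.2.2 by ring))
  mul_one a := Prod.ext (α := ℂ) (β := ℂ × ℂ) (show a.1 + 0 = a.1 by ring)
    (Prod.ext (show a.2.1 + 0 = a.2.1 by ring) (show a.2.2 + 0 + a.1 * 0 = a.2.2 by ring))
  inv_mul_cancel a := Prod.ext (α := ℂ) (β := ℂ × ℂ) (show -a.1 + a.1 = 0 by ring)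
    (Prod.ext (show -a.2.1 + a.2.1 = 0 by ring)
      (show a.1 * a.2.1 - a.2.2 + a.2.2 + -a.1 * a.2.1 = 0 by ring))

lemma gauss_finite (R : ℝ) : {z : ℂ | IsGaussInt z ∧ ‖z‖ ≤ R}.Finite := by
  have : {z : ℂ | IsGaussInt z ∧ ‖z‖ ≤ R} ⊆
      (fun p : ℤ × ℤ => (p.1 : ℂ) + (p.2 : ℂ) * Complex.I) ''
        (Set.Icc (-⌈R⌉) ⌈R⌉ ×ˢ Set.Icc (-⌈R⌉) ⌈R⌉) := by
    rintro z ⟨⟨a, b, rfl⟩, hz⟩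
    refine ⟨(a, b), ⟨?_, ?_⟩, rfl⟩
    · have hre : ((a : ℂ) + (b : ℂ) * Complex.I).re = a := by simp
      have := Complex.abs_re_le_norm ((a : ℂ) + (b : ℂ) * Complex.I)
      rw [hre] at this
      have h2 : |(a : ℝ)| ≤ R := le_trans this hz
      have h3 : |(a : ℝ)| ≤ (⌈R⌉ : ℝ) := le_trans h2 (Int.le_ceil R)
      rw [abs_le] at h3
      constructor
      · exact_mod_cast h3.1
      · exact_mod_cast h3.2
    · have hre : ((a : ℂ) + (b : ℂ) * Complex.I).im = b := by simp
      have := Complex.abs_im_le_norm ((a : ℂ) + (b : ℂ) * Complex.I)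
      rw [hre] at this
      have h2 : |(b : ℝ)| ≤ R := le_trans this hz
      have h3 : |(b : ℝ)| ≤ (⌈R⌉ : ℝ) := le_trans h2 (Int.le_ceil R)
      rw [abs_le] at h3
      constructor
      · exact_mod_cast h3.1
      · exact_mod_cast h3.2
  exact Set.Finite.subset (Set.Finite.image _ (Set.finite_Icc _ _ |>.prod (Set.finite_Icc _ _))) this
def GammaH : Subgroup Heis where
  carrier := {h | IsGaussInt h.1 ∧ IsGaussInt h.2.1 ∧ IsGaussInt h.2.2}
  one_mem' := ⟨gauss_zero, gauss_zero, gauss_zero⟩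
  mul_mem' := by
    rintro a b ⟨ha1, ha2, ha3⟩ ⟨hb1, hb2, hb3⟩
    exact ⟨gauss_add ha1 hb1, gauss_add ha2 hb2,
      gauss_add (gauss_add ha3 hb3) (gauss_mul ha1 hb2)⟩
  inv_mem' := by
    rintro a ⟨ha1, ha2, ha3⟩
    exact ⟨gauss_neg ha1, gauss_neg ha2, gauss_sub (gauss_mul ha1 ha2) ha3⟩

example : MulAction GammaH Heis := inferInstance
example (γ : GammaH) (x : Heis) : γ • x = (γ : Heis) * x := rfl

instance : ContinuousConstSMul GammaH Heis := by
  constructor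
  intro γ
  have : (fun x : Heis => γ • x) =
      (fun p : ℂ × ℂ × ℂ => ((γ : Heis).1 + p.1, (γ : Heis).2.1 + p.2.1,
        (γ : Heis).2.2 + p.2.2 + (γ : Heis).1 * p.2.1)) := rfl
  rw [this]
  fun_prop

lemma heis_norm_bound {K : Set Heis} (hK : IsCompact K) :
    ∃ R : ℝ, ∀ x ∈ K, ‖x.1‖ ≤ R ∧ ‖x.2.1‖ ≤ R ∧ ‖x.2.2‖ ≤ R := by
  classical
  set f : Heis → ℝ := fun x => max (‖x.1‖) (max (‖x.2.1‖) (‖x.2.2‖)) with hf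
  have hfc : Continuous f := by
    apply Continuous.max
    · exact continuous_norm.comp (continuous_fst : Continuous fun p : ℂ × ℂ × ℂ => p.1)
    · apply Continuous.max
      · exact continuous_norm.comp ((continuous_fst.comp continuous_snd : Continuous fun p : ℂ × ℂ × ℂ => p.2.1))
      · exact continuous_norm.comp ((continuous_snd.comp continuous_snd : Continuous fun p : ℂ × ℂ × ℂ => p.2.2))
  obtain ⟨R, hR⟩ := (hK.image hfc).bddAbove
  refine ⟨R, fun x hx => ?_⟩
  have hfx : f x ≤ R := hR (Set.mem_image_of_mem f hx)
  refine ⟨le_trans (le_max_left _ _) hfx, ?_, ?_⟩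
  · exact le_trans (le_trans (le_max_left _ _) (le_max_right _ _)) hfx
  · exact le_trans (le_trans (le_max_right _ _) (le_max_right _ _)) hfx

lemma cabs_sub_le (a b : ℂ) : ‖a - b‖ ≤ ‖a‖ + ‖b‖ := by
  simpa [sub_eq_add_neg] using norm_add_le a (-b)

instance : ProperlyDiscontinuousSMul GammaH Heis := by
  constructor
  intro K L hK hL
  obtain ⟨RK, hRK⟩ := heis_norm_bound hK
  obtain ⟨RL, hRL⟩ := heis_norm_bound hL
  set R1 : ℝ := RL + RK with hR1
  set R3 : ℝ := RL + RK + R1 * RK with hR3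
  set S : Set (ℂ × ℂ × ℂ) :=
    {z | IsGaussInt z ∧ ‖z‖ ≤ R1} ×ˢ
      ({z | IsGaussInt z ∧ ‖z‖ ≤ R1} ×ˢ {z | IsGaussInt z ∧ ‖z‖ ≤ R3}) with hS
  have hSfin : S.Finite :=
    (gauss_finite R1).prod ((gauss_finite R1).prod (gauss_finite R3))
  have himg : (Subtype.val '' {γ : GammaH | (γ • ·) '' K ∩ L ≠ ∅}) ⊆ S := by
    rintro g ⟨γ, hγ, rfl⟩
    obtain ⟨l, ⟨k, hkK, hkl⟩, hlL⟩ := Set.nonempty_iff_ne_empty.2 hγ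
    obtain ⟨hg1, hg2, hg3⟩ := γ.2
    have hmul : (γ : Heis) * k = l := hkl
    rw [Heis.mul_def] at hmul
    have e1 : (γ : Heis).1 = l.1 - k.1 := by
      have := congrArg Prod.fst hmul; simp at this; linear_combination this
    have e2 : (γ : Heis).2.1 = l.2.1 - k.2.1 := by
      have := congrArg (fun p : Heis => p.2.1) hmul; simp at this; linear_combination this
    have e3 : (γ : Heis).2.2 = l.2.2 - k.2.2 - (γ : Heis).1 * k.2.1 := by
      have := congrArg (fun p : Heis => p.2.2) hmul; simp at this; linear_combination this
    obtain ⟨hk1, hk2, hk3⟩ := hRK k hkK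
    obtain ⟨hl1, hl2, hl3⟩ := hRL l hlL
    have b1 : ‖(γ : Heis).1‖ ≤ R1 := by
      rw [e1]; exact le_trans (cabs_sub_le _ _) (add_le_add hl1 hk1)
    have b2 : ‖(γ : Heis).2.1‖ ≤ R1 := by
      rw [e2]; exact le_trans (cabs_sub_le _ _) (add_le_add hl2 hk2)
    have b3 : ‖(γ : Heis).2.2‖ ≤ R3 := by
      rw [e3]
      refine le_trans (cabs_sub_le _ _) ?_
      rw [norm_mul]
      refine add_le_add (le_trans (cabs_sub_le _ _) (add_le_add hl3 hk3)) ?_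
      exact mul_le_mul b1 hk2 (norm_nonneg _) (le_trans (norm_nonneg _) b1)
    exact ⟨⟨hg1, b1⟩, ⟨hg2, b2⟩, ⟨hg3, b3⟩⟩
  have := hSfin.subset himg
  simp_rw [Set.nonempty_iff_ne_empty]
  exact Set.Finite.of_finite_image this (Set.injOn_of_injective Subtype.val_injective)
lemma M_entry01 (z₁ z₂ z₃ : ℂ) : M z₁ z₂ z₃ 0 1 = z₁ := by simp [M]
lemma M_entry12 (z₁ z₂ z₃ : ℂ) : M z₁ z₂ z₃ 1 2 = z₂ := by simp [M]
lemma M_entry02 (z₁ z₂ z₃ : ℂ) : M z₁ z₂ z₃ 0 2 = z₃ := by simp [M]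

noncomputable def heisHomeo : Heis ≃ₜ ↥heisSet where
  toFun p := ⟨M p.1 p.2.1 p.2.2, p.1, p.2.1, p.2.2, rfl⟩
  invFun A := ((A : Matrix (Fin 3) (Fin 3) ℂ) 0 1, (A : Matrix (Fin 3) (Fin 3) ℂ) 1 2,
    (A : Matrix (Fin 3) (Fin 3) ℂ) 0 2)
  left_inv p := by
    obtain ⟨p₁, p₂, p₃⟩ := p
    show ((M p₁ p₂ p₃ 0 1, M p₁ p₂ p₃ 1 2, M p₁ p₂ p₃ 0 2) : ℂ × ℂ × ℂ) = (p₁, p₂, p₃)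
    rw [M_entry01, M_entry12, M_entry02]
  right_inv A := by
    obtain ⟨B, z₁, z₂, z₃, rfl⟩ := A
    apply Subtype.ext
    show M (M z₁ z₂ z₃ 0 1) (M z₁ z₂ z₃ 1 2) (M z₁ z₂ z₃ 0 2) = M z₁ z₂ z₃
    rw [M_entry01, M_entry12, M_entry02]
  continuous_toFun := by
    apply Continuous.subtype_mk
    show Continuous fun p : ℂ × ℂ × ℂ => M p.1 p.2.1 p.2.2
    apply continuous_matrix
    intro i j
    fin_cases i <;> fin_cases j <;> simp [M, Matrix.vecHead, Matrix.vecTail] <;> fun_prop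
  continuous_invFun := by
    refine Continuous.prodMk ?_ (Continuous.prodMk ?_ ?_)
    · exact (continuous_apply (1 : Fin 3)).comp ((continuous_apply (0 : Fin 3)).comp continuous_subtype_val)
    · exact (continuous_apply (2 : Fin 3)).comp ((continuous_apply (1 : Fin 3)).comp continuous_subtype_val)
    · exact (continuous_apply (2 : Fin 3)).comp ((continuous_apply (0 : Fin 3)).comp continuous_subtype_val)

def Heis.mk (a b c : ℂ) : Heis := ((a, b, c) : ℂ × ℂ × ℂ)

lemma Heis.mk_eta (p : Heis) : Heis.mk p.1 p.2.1 p.2.2 = p := rfl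

lemma rel_iff (p q : Heis) :
    (MulAction.orbitRel GammaH Heis).r p q ↔
      iwasawaSetoid.r (heisHomeo p) (heisHomeo q) := by
  constructor
  · rintro ⟨γ, rfl⟩
    obtain ⟨hg1, hg2, hg3⟩ := (γ⁻¹).2
    refine ⟨M ((γ⁻¹ : GammaH) : Heis).1 ((γ⁻¹ : GammaH) : Heis).2.1 ((γ⁻¹ : GammaH) : Heis).2.2,
      ⟨_, _, _, hg1, hg2, hg3, rfl⟩, ?_⟩
    show M q.1 q.2.1 q.2.2 = _ * M ((γ : Heis) * q).1 ((γ : Heis) * q).2.1 ((γ : Heis) * q).2.2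
    rw [M_mul]
    have : ((γ⁻¹ : GammaH) : Heis) * ((γ : Heis) * q) = q := by
      rw [← mul_assoc]
      norm_num
    have h2 := congrArg (fun r : Heis => M r.1 r.2.1 r.2.2) this
    simp only [Heis.mul_def] at h2
    exact h2.symm
  · rintro ⟨δ, ⟨z₁, z₂, z₃, h₁, h₂, h₃, rfl⟩, hB⟩
    have hB' : M q.1 q.2.1 q.2.2 = M (z₁ + p.1) (z₂ + p.2.1) (z₃ + p.2.2 + z₁ * p.2.1) := by
      rw [← M_mul]; exact hB
    have hq : q = Heis.mk z₁ z₂ z₃ * p := by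
      have := M_inj (a₁ := ((q.1, q.2.1, q.2.2) : ℂ × ℂ × ℂ))
        (a₂ := ((z₁ + p.1, z₂ + p.2.1, z₃ + p.2.2 + z₁ * p.2.1) : ℂ × ℂ × ℂ)) hB'
      rw [Heis.mul_def, ← Heis.mk_eta q]
      exact congrArg (fun r : ℂ × ℂ × ℂ => Heis.mk r.1 r.2.1 r.2.2) this
    refine ⟨(⟨Heis.mk z₁ z₂ z₃, h₁, h₂, h₃⟩ : GammaH)⁻¹, ?_⟩
    show (((⟨Heis.mk z₁ z₂ z₃, h₁, h₂, h₃⟩ : GammaH)⁻¹ : GammaH) : Heis) * q = p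
    rw [hq, ← mul_assoc]
    norm_num

noncomputable def quotHomeo :
    Quotient (MulAction.orbitRel GammaH Heis) ≃ₜ Quotient iwasawaSetoid where
  toEquiv := Quotient.congr heisHomeo.toEquiv rel_iff
  continuous_toFun := by
    apply continuous_quot_lift
    exact (continuous_quotient_mk').comp heisHomeo.continuous
  continuous_invFun := by
    apply continuous_quot_lift
    exact (continuous_quotient_mk').comp heisHomeo.symm.continuous


/-- The Iwasawa manifold `X = Γ\G` (the quotient of the Heisenberg group `G`,
a subspace of the 3×3 complex matrices, by the left-multiplication action of `Γ`,
with the quotient topology) is Hausdorff. -/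
theorem stmt16 : T2Space (Quotient iwasawaSetoid) :=
  quotHomeo.symm.isEmbedding.t2Space
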